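/- Let n ≥ 1 and let k be an integer with 0 ≤ k ≤ n. Let Y be a finite set with an action of Sym_n such that every element of Y has a support of size at most k. Then there exist a finite set Q, on which Sym_n acts trivially and whose cardinality equals the number of orbits of Y, and a surjective Sym_n-equivariant map from Q × [n]^{(k)} to Y (where Sym_n acts on Q × [n]^{(k)} by acting componentwise on the second factor). -/

import Mathlib

lemma exists_perm_comp {n k : ℕ} (v₀ v : Fin k ↪ Fin n) :
    ∃ σ : Equiv.Perm (Fin n), ∀ i, σ (v₀ i) = v i := by
  classical
  refine ⟨Equiv.extendSubtype (v₀.toEquivRange.symm.trans v.toEquivRange), fun i => ?_⟩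
  rw [Equiv.extendSubtype_apply_of_mem _ _ (Set.mem_range_self i)]
  simp [Function.Embedding.toEquivRange_symm_apply_self,
    Function.Embedding.toEquivRange_apply]

/-- Let `0 ≤ k ≤ n` and let `Y` be a finite `Sym_n`-set each of whose
elements has a support of size at most `k`.  Then there are a finite set `Q` (with the
trivial `Sym_n`-action) whose cardinality is the number of orbits of `Y`, and a
surjective `Sym_n`-equivariant map from `Q × [n]^{(k)}` to `Y`, where `Sym_n` acts
componentwise on the second factor (embeddings `Fin k ↪ Fin n`). -/
theorem statement14 (n k : ℕ) (hn : 1 ≤ n) (hk : k ≤ n)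
    (Y : Type) [Fintype Y] [MulAction (Equiv.Perm (Fin n)) Y]
    (hsupp : ∀ y : Y, ∃ S : Finset (Fin n), S.card ≤ k ∧
      ∀ π : Equiv.Perm (Fin n), (∀ i ∈ S, π i = i) → π • y = y) :
    ∃ (Q : Type) (_ : Fintype Q),
      Fintype.card Q = Nat.card (MulAction.orbitRel.Quotient (Equiv.Perm (Fin n)) Y) ∧
      ∃ f : Q × (Fin k ↪ Fin n) → Y, Function.Surjective f ∧
        ∀ (π : Equiv.Perm (Fin n)) (q : Q) (v : Fin k ↪ Fin n),
          f (q, v.trans π.toEmbedding) = π • f (q, v) := by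
  classical
  set Q := MulAction.orbitRel.Quotient (Equiv.Perm (Fin n)) Y with hQ
  letI : Fintype Q := Fintype.ofFinite Q
  refine ⟨Q, inferInstance, (Nat.card_eq_fintype_card).symm, ?_⟩
  -- representative of each orbit
  set y₀ : Q → Y := fun q => Quotient.out q with hy₀
  -- support of each representative
  have hS : ∀ q : Q, ∃ v₀ : Fin k ↪ Fin n,
      ∀ σ τ : Equiv.Perm (Fin n), (∀ i, σ (v₀ i) = τ (v₀ i)) → σ • y₀ q = τ • y₀ q := by
    intro q
    obtain ⟨S, hScard, hSsupp⟩ := hsupp (y₀ q)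
    obtain ⟨T, hST, hTcard⟩ := Finset.exists_superset_card_eq hScard
      (by simpa using hk)
    let e : T ≃ Fin k := T.equivFinOfCardEq hTcard
    refine ⟨e.symm.toEmbedding.trans (Function.Embedding.subtype _), fun σ τ hστ => ?_⟩
    have hfix : (τ⁻¹ * σ) • y₀ q = y₀ q := by
      apply hSsupp
      intro s hs
      have : (⟨s, hST hs⟩ : T) = e.symm (e ⟨s, hST hs⟩) := (e.symm_apply_apply _).symm
      have h1 : σ s = τ s := by
        have := hστ (e ⟨s, hST hs⟩)
        simpa [Function.Embedding.trans_apply, ← this] using hστ (e ⟨s, hST hs⟩)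
      simp [Equiv.Perm.mul_apply, h1]
    calc σ • y₀ q = τ • ((τ⁻¹ * σ) • y₀ q) := by rw [← mul_smul]; group
    _ = τ • y₀ q := by rw [hfix]
  choose v₀ hv₀ using hS
  -- choose permutations
  have hperm : ∀ (q : Q) (v : Fin k ↪ Fin n), ∃ σ : Equiv.Perm (Fin n),
      ∀ i, σ (v₀ q i) = v i := fun q v => exists_perm_comp _ _
  choose σ hσ using hperm
  refine ⟨fun p => σ p.1 p.2 • y₀ p.1, ?_, ?_⟩
  · intro y
    set q : Q := Quotient.mk'' y with hq
    have hrel : y ∈ MulAction.orbit (Equiv.Perm (Fin n)) (y₀ q) := by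
      have : Quotient.mk'' (y₀ q) = q := Quotient.out_eq' q
      exact Quotient.exact' (hq.trans this.symm)
    obtain ⟨τ, hτ⟩ := hrel
    refine ⟨(q, (v₀ q).trans τ.toEmbedding), ?_⟩
    have := hv₀ q (σ q ((v₀ q).trans τ.toEmbedding)) τ (fun i => by
      simpa using hσ q ((v₀ q).trans τ.toEmbedding) i)
    simpa [this] using hτ
  · intro π q v
    have := hv₀ q (σ q (v.trans π.toEmbedding)) (π * σ q v) (fun i => by
      simp [Equiv.Perm.mul_apply, hσ q v i, hσ q (v.trans π.toEmbedding) i])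
    simp [this, mul_smul]
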